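/- Assume a_{μν} ≠ 0 for all distinct μ,ν ∈ {0,1,2,3}, and define ℓ_{μν} := b_{μν} / a_{μν} and q_{μν} := c_{μν} / a_{μν} for distinct μ,ν. Then for each ν ∈ {0,1,2,3}: λ_{μ_ν} q_{μ_ν ν} + λ_{μ̃_ν} q_{μ̃_ν ν} + λ_{ν̃} ℓ_{μ̃_ν ν} q_{ν̃ ν} = 0. -/

import Mathlib

/-- For distinct `μ ν`, `pr μ ν = (μ', ν')`, the unique pair with
`{μ', ν'} = {0,1,2,3} \ {μ, ν}` and `μ' > ν'` iff `μ > ν`; `pr μ μ = (μ, μ)`. -/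
def pr : Fin 4 → Fin 4 → Fin 4 × Fin 4 :=
  ![![(0,0),(2,3),(1,3),(1,2)],
    ![(3,2),(1,1),(0,3),(0,2)],
    ![(3,1),(3,0),(2,2),(0,1)],
    ![(2,1),(2,0),(1,0),(3,3)]]

/-- `a_{μν} := λ_μ λ_{ν'} + λ_ν λ_{μ'}`. -/
def aC (lam : Fin 4 → ℂ) (μ ν : Fin 4) : ℂ :=
  lam μ * lam (pr μ ν).2 + lam ν * lam (pr μ ν).1

/-- `b_{μν} := λ_μ λ_{μ'} + λ_ν λ_{ν'}`. -/
def bC (lam : Fin 4 → ℂ) (μ ν : Fin 4) : ℂ :=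
  lam μ * lam (pr μ ν).1 + lam ν * lam (pr μ ν).2

/-- `c_{μν} := (−1)^{μ+ν} (λ_{μ'}² − λ_{ν'}²)`. -/
def cC (lam : Fin 4 → ℂ) (μ ν : Fin 4) : ℂ :=
  (-1 : ℂ) ^ (μ.val + ν.val) * (lam (pr μ ν).1 ^ 2 - lam (pr μ ν).2 ^ 2)

/-- The table `ν ↦ (ν̃, μ_ν, μ̃_ν)`. -/
def tnu : Fin 4 → Fin 4 × Fin 4 × Fin 4 :=
  ![(1,2,3),(0,3,2),(3,0,1),(2,1,0)]


lemma aux_frac (a b c p q r s x y z : ℂ) (ha : a ≠ 0) (hb : b ≠ 0) (hc : c ≠ 0)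
    (h : x * p * (b * c) + y * q * (a * c) + z * r * s * a = 0) :
    x * (p / a) + y * (q / b) + z * (r / b) * (s / c) = 0 := by
  field_simp
  linear_combination h

/-- Lemma 4.5: with `ℓ_{μν} := b_{μν}/a_{μν}` and
`q_{μν} := c_{μν}/a_{μν}`, for each `ν`:
`λ_{μ_ν} q_{μ_ν ν} + λ_{μ̃_ν} q_{μ̃_ν ν} + λ_{ν̃} ℓ_{μ̃_ν ν} q_{ν̃ ν} = 0`. -/
theorem stmt8 (lam : Fin 4 → ℂ)
    (ha : ∀ μ ν : Fin 4, μ ≠ ν → aC lam μ ν ≠ 0) :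
    ∀ ν : Fin 4,
      lam (tnu ν).2.1 * (cC lam (tnu ν).2.1 ν / aC lam (tnu ν).2.1 ν) +
        lam (tnu ν).2.2 * (cC lam (tnu ν).2.2 ν / aC lam (tnu ν).2.2 ν) +
        lam (tnu ν).1 * (bC lam (tnu ν).2.2 ν / aC lam (tnu ν).2.2 ν) *
          (cC lam (tnu ν).1 ν / aC lam (tnu ν).1 ν) = 0 := by
  intro ν
  have h1 := ha 2 0 (by decide)
  have h2 := ha 3 0 (by decide)
  have h3 := ha 1 0 (by decide)
  have h4 := ha 3 1 (by decide)
  have h6 := ha 2 1 (by decide)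
  have h7 := ha 0 2 (by decide)
  have h8 := ha 1 2 (by decide)
  have h10 := ha 1 3 (by decide)
  have h11 := ha 2 3 (by decide)
  have h12 := ha 0 3 (by decide)
  simp only [aC, pr, Matrix.cons_val_zero, Matrix.cons_val_one, Matrix.head_cons,
    Matrix.cons_val_two, Matrix.tail_cons, Matrix.cons_val_three, Fin.isValue] at h1 h2 h3 h4 h6 h7 h8 h10 h11 h12
  have hcase : ν = 0 ∨ ν = 1 ∨ ν = 2 ∨ ν = 3 := by omega
  rcases hcase with rfl | rfl | rfl | rfl <;>
  · simp only [tnu, Matrix.cons_val_zero, Matrix.cons_val_one, Matrix.head_cons,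
      Matrix.cons_val_two, Matrix.tail_cons, Matrix.cons_val_three, Fin.isValue]
    refine aux_frac _ _ _ _ _ _ _ _ _ _ (ha _ _ (by decide)) (ha _ _ (by decide))
      (ha _ _ (by decide)) ?_
    simp only [aC, bC, cC, pr, Matrix.cons_val_zero, Matrix.cons_val_one,
      Matrix.head_cons, Matrix.cons_val_two, Matrix.tail_cons, Matrix.cons_val_three,
      Fin.isValue, show ((0:Fin 4):ℕ) = 0 from rfl, show ((1:Fin 4):ℕ) = 1 from rfl,
      show ((2:Fin 4):ℕ) = 2 from rfl, show ((3:Fin 4):ℕ) = 3 from rfl]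
    ring
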